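/- arXiv:2408.10408 — 2 statements merged into one kernel-verified Lean document; each statement's English description precedes it below -/
import Mathlib

section
/- Let R be a commutative ring, a : ℤ → R with a(d) = 0 for d < 0, and d ≥ 1 a fixed integer. Define b : ℤ → R by b(i) = a(d·i) for i ≥ 0 and b(i) = 0 for i < 0. Then for partitions λ, μ with at most r parts, det( b(λ_i − μ_j − i + j) )_{i,j=1}^r = det( a(α_i − β_j − i + j) )_{i,j=1}^r, where α_i = d·λ_i + (d−1)(r−i) and β_j = d·μ_j + (d−1)(r−j). In particular, if a is a Pólya frequency sequence (over ℝ, nonnegative) then so is its d-th Veronese b. -/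
/-- The `d`-th Veronese of a sequence vanishing on negatives. -/
noncomputable def veroneseSeq {R : Type*} [CommRing R] (a : ℤ → R) (d : ℕ) : ℤ → R :=
  fun i => if i < 0 then 0 else a (d * i)

/-- The Veronese evaluated anywhere equals `a (d * k)` when `a` vanishes on negatives. -/
lemma veroneseSeq_eq {R : Type*} [CommRing R] (a : ℤ → R)
    (ha : ∀ k : ℤ, k < 0 → a k = 0) (d : ℕ) (hd : 1 ≤ d) (k : ℤ) :
    veroneseSeq a d k = a (d * k) := by
  by_cases hk : k < 0
  · have hdk : (d : ℤ) * k < 0 :=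
      mul_neg_of_pos_of_neg (by exact_mod_cast hd) hk
    simp [veroneseSeq, hk, ha _ hdk]
  · simp [veroneseSeq, hk]

/-- Toeplitz minors of the `d`-th Veronese of a sequence are Toeplitz minors
of the original sequence (via the index rescaling `α_i = dλ_i + (d-1)(r-i)`); in
particular the Veronese of a Pólya frequency sequence is again a Pólya frequency
sequence. -/
theorem stmt_2 {R : Type*} [CommRing R] (a : ℤ → R)
    (ha : ∀ k : ℤ, k < 0 → a k = 0) (d : ℕ) (hd : 1 ≤ d) :
    (∀ (r : ℕ) (lam mu : Fin r → ℕ),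
      (∀ i j : Fin r, i ≤ j → lam j ≤ lam i) →
      (∀ i j : Fin r, i ≤ j → mu j ≤ mu i) →
      Matrix.det (Matrix.of fun i j : Fin r =>
          veroneseSeq a d ((lam i : ℤ) - (mu j : ℤ) - (i : ℤ) + (j : ℤ))) =
        Matrix.det (Matrix.of fun i j : Fin r =>
          a (((d * lam i + (d - 1) * (r - 1 - (i : ℕ)) : ℕ) : ℤ)
            - ((d * mu j + (d - 1) * (r - 1 - (j : ℕ)) : ℕ) : ℤ)
            - (i : ℤ) + (j : ℤ)))) ∧
    (∀ a' : ℤ → ℝ, (∀ k : ℤ, k < 0 → a' k = 0) →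
      (∀ (n : ℕ) (r c : Fin n → ℕ), StrictMono r → StrictMono c →
        0 ≤ Matrix.det (Matrix.of fun i j : Fin n => a' ((r i : ℤ) - (c j : ℤ)))) →
      (∀ (n : ℕ) (r c : Fin n → ℕ), StrictMono r → StrictMono c →
        0 ≤ Matrix.det (Matrix.of fun i j : Fin n =>
          veroneseSeq a' d ((r i : ℤ) - (c j : ℤ))))) := by
  constructor
  · intro r lam mu _ _
    congr 1
    ext i j
    have hr : 1 ≤ r := i.pos
    have hi : (i : ℕ) ≤ r - 1 := Nat.le_pred_of_lt i.isLt
    have hj : (j : ℕ) ≤ r - 1 := Nat.le_pred_of_lt j.isLt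
    have h1 : ((d - 1 : ℕ) : ℤ) = (d : ℤ) - 1 := by
      push_cast [Nat.cast_sub hd]; ring
    have h2 : ((r - 1 - (i : ℕ) : ℕ) : ℤ) = (r : ℤ) - 1 - (i : ℤ) := by
      rw [Nat.cast_sub hi, Nat.cast_sub hr]; push_cast; ring
    have h3 : ((r - 1 - (j : ℕ) : ℕ) : ℤ) = (r : ℤ) - 1 - (j : ℤ) := by
      rw [Nat.cast_sub hj, Nat.cast_sub hr]; push_cast; ring
    have key : ((d * lam i + (d - 1) * (r - 1 - (i : ℕ)) : ℕ) : ℤ)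
        - ((d * mu j + (d - 1) * (r - 1 - (j : ℕ)) : ℕ) : ℤ)
        - (i : ℤ) + (j : ℤ)
        = (d : ℤ) * ((lam i : ℤ) - (mu j : ℤ) - (i : ℤ) + (j : ℤ)) := by
      push_cast [h1, h2, h3]
      ring
    simp only [Matrix.of_apply, key]
    exact veroneseSeq_eq a ha d hd _
  · intro a' ha' hpf n r c hrm hcm
    have hmat : (Matrix.of fun i j : Fin n =>
        veroneseSeq a' d ((r i : ℤ) - (c j : ℤ))) =
        (Matrix.of fun i j : Fin n =>
          a' (((d * r i : ℕ) : ℤ) - ((d * c j : ℕ) : ℤ))) := by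
      ext i j
      simp only [Matrix.of_apply]
      rw [veroneseSeq_eq a' ha' d hd]
      congr 1
      push_cast
      ring
    rw [hmat]
    exact hpf n (fun i => d * r i) (fun j => d * c j)
      (fun x y hxy => (Nat.mul_lt_mul_left hd).mpr (hrm hxy))
      (fun x y hxy => (Nat.mul_lt_mul_left hd).mpr (hcm hxy))
end

section
/- Fix m ≥ 1 and s ≥ 0, and let a_d = dim S^d(ℂ^{m|s}) (the super symmetric power: a_d = ∑_{i=0}^d C(m + i − 1, i) · C(s, d − i)), with a_d = 0 for d < 0. For a partition λ of length ℓ, the Jacobi–Trudi determinant det( a(λ_i − i + j) )_{i,j=1}^ℓ is zero if and only if λ_{m+1} > s, i.e., iff the Young diagram of λ does not fit inside the (m|s)-hook {(i,j) : i ≤ m or j ≤ s}. -/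
open Polynomial Finset

/-- `a_d = dim S^d(ℂ^{m|s}) = ∑_{i=0}^d C(m+i−1, i)·C(s, d−i)`, extended by `0` on
negative integers. -/
def superSymDim (m s : ℕ) : ℤ → ℤ := fun d =>
  if d < 0 then 0
  else ∑ i ∈ Finset.range (d.toNat + 1),
    ((m + i - 1).choose i * s.choose (d.toNat - i) : ℤ)

lemma ssd_neg (m s : ℕ) {d : ℤ} (h : d < 0) : superSymDim m s d = 0 := by
  simp [superSymDim, h]

lemma ssd_coe (m s n : ℕ) : superSymDim m s (n : ℤ)
    = ∑ i ∈ Finset.range (n + 1), ((m + i - 1).choose i * s.choose (n - i) : ℤ) := by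
  simp [superSymDim]

lemma ssd_rec (m s : ℕ) (d : ℤ) :
    superSymDim m (s+1) d = superSymDim m s d + superSymDim m s (d-1) := by
  rcases lt_or_ge d 0 with h | h
  · rw [ssd_neg _ _ h, ssd_neg _ _ h, ssd_neg _ _ (by omega)]; ring
  · lift d to ℕ using h with n
    rcases Nat.eq_zero_or_pos n with rfl | hn
    · norm_num [superSymDim]
    · obtain ⟨k, rfl⟩ := Nat.exists_eq_add_of_le hn
      have h1 : ((1 + k : ℕ) : ℤ) - 1 = (k : ℕ) := by push_cast; ring
      rw [h1, ssd_coe, ssd_coe, ssd_coe]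
      have hsum : ∀ (t : ℕ), ∑ i ∈ Finset.range (1 + k + 1), ((m + i - 1).choose i * t.choose (1 + k - i) : ℤ)
          = ∑ i ∈ Finset.range (k + 1), ((m + i - 1).choose i * t.choose (1 + k - i) : ℤ)
            + (m + (k+1) - 1).choose (k+1) := by
        intro t
        rw [show 1 + k + 1 = (k+1) + 1 by ring, Finset.sum_range_succ]
        simp [show 1 + k - (k+1) = 0 by omega, show 1 + k = k + 1 by ring]
      rw [hsum, hsum]
      have : ∑ i ∈ Finset.range (k + 1), ((m + i - 1).choose i * (s+1).choose (1 + k - i) : ℤ)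
          = ∑ i ∈ Finset.range (k + 1), ((m + i - 1).choose i * s.choose (1 + k - i) : ℤ)
            + ∑ i ∈ Finset.range (k + 1), ((m + i - 1).choose i * s.choose (k - i) : ℤ) := by
        rw [← Finset.sum_add_distrib]
        apply Finset.sum_congr rfl
        intro i hi
        rw [Finset.mem_range] at hi
        have : 1 + k - i = (k - i) + 1 := by omega
        rw [this, Nat.choose_succ_succ' s (k-i)]
        push_cast
        ring
      rw [this]; ring

noncomputable def Rpoly (m : ℕ) : Polynomial ℚ :=
  ∏ t ∈ Finset.range (m-1), (Polynomial.X + Polynomial.C ((t:ℚ)+1))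

lemma Rpoly_natDegree (m : ℕ) : (Rpoly m).natDegree = m - 1 := by
  rw [Rpoly, natDegree_prod _ _ (fun t _ => X_add_C_ne_zero _)]
  simp only [natDegree_X_add_C]
  simp

lemma Rpoly_eval (m : ℕ) (x : ℚ) :
    (Rpoly m).eval x = ∏ t ∈ Finset.range (m-1), (x + ((t:ℚ) + 1)) := by
  simp [Rpoly, eval_prod]

lemma prod_consec (n k : ℕ) :
    ∏ t ∈ Finset.range k, (n + t + 1) = k.factorial * (n + k).choose k := by
  induction k with
  | zero => simp
  | succ k ih =>
    have h := Nat.add_one_mul_choose_eq (n + k) k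
    have h2 : k.factorial * (n + k).choose k * (n+k+1)
        = k.factorial * ((n+k+1) * (n+k).choose k) := by ring
    rw [Finset.prod_range_succ, ih, h2, h, Nat.factorial_succ,
      show n+(k+1) = n+k+1 by ring]
    ring

lemma ssd0_coe (m : ℕ) (hm : 1 ≤ m) (n : ℕ) :
    superSymDim m 0 (n : ℤ) = ((m - 1 + n).choose n : ℤ) := by
  rw [ssd_coe]
  rw [Finset.sum_range_succ]
  have : ∀ i ∈ Finset.range n, ((m + i - 1).choose i * (Nat.choose 0 (n - i)) : ℤ) = 0 := by
    intro i hi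
    rw [Finset.mem_range] at hi
    rw [(Nat.choose_eq_zero_of_lt (show (0:ℕ) < n - i by omega) : (0:ℕ).choose (n-i) = 0)]
    ring
  rw [Finset.sum_congr rfl this]
  simp [show m + n - 1 = m - 1 + n by omega]

lemma Rpoly_eval_int (m : ℕ) (hm : 1 ≤ m) (z : ℤ) (hz : -((m:ℤ) - 1) ≤ z) :
    (Rpoly m).eval (z : ℚ) = ((m-1).factorial : ℚ) * (superSymDim m 0 z : ℚ) := by
  rcases lt_or_ge z 0 with h | h
  · rw [ssd_neg _ _ h, Rpoly_eval]
    have : ∃ t ∈ Finset.range (m-1), ((z:ℚ) + ((t:ℚ) + 1)) = 0 := by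
      refine ⟨(-z-1).toNat, ?_, ?_⟩
      · rw [Finset.mem_range]; omega
      · have : ((((-z-1).toNat : ℤ)) : ℚ) = ((-z-1 : ℤ) : ℚ) := by
          congr 1; omega
        push_cast at this ⊢
        rw [this]; ring
    obtain ⟨t, ht, hzero⟩ := this
    rw [Finset.prod_eq_zero ht hzero]
    simp
  · lift z to ℕ using h with n
    rw [ssd0_coe m hm, Rpoly_eval]
    have h1 : ∏ t ∈ Finset.range (m-1), (((n:ℤ):ℚ) + ((t:ℚ)+1))
        = ((∏ t ∈ Finset.range (m-1), (n + t + 1) : ℕ) : ℚ) := by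
      push_cast
      exact Finset.prod_congr rfl (fun t _ => by ring)
    rw [h1, prod_consec]
    have h2 : (n + (m-1)).choose (m-1) = (m - 1 + n).choose n := by
      have := Nat.choose_symm (show m - 1 ≤ m - 1 + n by omega)
      rw [show m - 1 + n - (m-1) = n by omega] at this
      rw [this, Nat.add_comm n (m-1)]
    rw [h2]
    push_cast
    ring

lemma int_id (m : ℕ) (hm : 1 ≤ m) (s : ℕ) (d : ℤ) :
    superSymDim m s d
      = ∑ k ∈ Finset.range (s+1), (s.choose k : ℤ) * superSymDim m 0 (d - k) := by
  rcases lt_or_ge d 0 with h | h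
  · rw [ssd_neg _ _ h]
    refine (Finset.sum_eq_zero fun k _ => ?_).symm
    rw [ssd_neg _ _ (by omega)]; ring
  · lift d to ℕ using h with n
    rw [ssd_coe]
    have key : ∀ N : ℕ, n + s ≤ N →
        ∑ k ∈ Finset.range (N+1), (s.choose k : ℤ) * superSymDim m 0 ((n:ℤ) - k)
        = ∑ k ∈ Finset.range (s+1), (s.choose k : ℤ) * superSymDim m 0 ((n:ℤ) - k) := by
      intro N hN
      refine (Finset.sum_subset (by intro x hx; simp at *; omega) ?_).symm
      intro k _ hk
      simp only [Finset.mem_range, not_lt] at hk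
      rw [Nat.choose_eq_zero_of_lt (by omega)]
      ring
    rw [← key (n + s) le_rfl, ← Finset.sum_range_reflect]
    have step1 : ∀ j ∈ Finset.range (n+1),
        ((m + (n + 1 - 1 - j) - 1).choose (n + 1 - 1 - j) * s.choose (n - (n + 1 - 1 - j)) : ℤ)
        = (s.choose j : ℤ) * superSymDim m 0 ((n:ℤ) - j) := by
      intro j hj
      rw [Finset.mem_range] at hj
      have e1 : (n:ℤ) - j = ((n - j : ℕ) : ℤ) := by omega
      rw [e1, ssd0_coe m hm, show n + 1 - 1 - j = n - j by omega,
        show n - (n - j) = j by omega, show m + (n-j) - 1 = m - 1 + (n-j) by omega]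
      ring
    rw [Finset.sum_congr rfl step1]
    refine Finset.sum_subset (by intro x hx; simp at *; omega) ?_
    intro k hk1 hk2
    simp only [Finset.mem_range, not_lt] at hk2
    rw [ssd_neg _ _ (by omega)]
    ring

noncomputable def Ppoly (m s : ℕ) : Polynomial ℚ :=
  Polynomial.C (((m-1).factorial : ℚ)⁻¹) *
    ∑ k ∈ Finset.range (s+1),
      Polynomial.C ((s.choose k : ℚ)) * (Rpoly m).comp (Polynomial.X - Polynomial.C (k:ℚ))

lemma Ppoly_natDegree (m s : ℕ) (hm : 1 ≤ m) : (Ppoly m s).natDegree < m := by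
  have h1 : (∑ k ∈ Finset.range (s+1),
      Polynomial.C ((s.choose k : ℚ)) * (Rpoly m).comp (Polynomial.X - Polynomial.C (k:ℚ))).natDegree
      ≤ m - 1 := by
    apply Polynomial.natDegree_sum_le_of_forall_le
    intro k _
    refine le_trans (Polynomial.natDegree_C_mul_le _ _) ?_
    rw [Polynomial.natDegree_comp, Rpoly_natDegree, Polynomial.natDegree_X_sub_C, mul_one]
  calc (Ppoly m s).natDegree ≤ _ := Polynomial.natDegree_C_mul_le _ _
    _ ≤ m - 1 := h1
    _ < m := by omega

lemma Ppoly_eval (m : ℕ) (hm : 1 ≤ m) (s : ℕ) (d : ℤ) (hd : (s:ℤ) - m + 1 ≤ d) :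
    (Ppoly m s).eval (d:ℚ) = (superSymDim m s d : ℚ) := by
  have hfac : ((m-1).factorial : ℚ) ≠ 0 := Nat.cast_ne_zero.2 (Nat.factorial_ne_zero _)
  rw [Ppoly]
  simp only [Polynomial.eval_mul, Polynomial.eval_C, Polynomial.eval_finset_sum,
    Polynomial.eval_comp, Polynomial.eval_sub, Polynomial.eval_X]
  have step : ∀ k ∈ Finset.range (s+1),
      (s.choose k : ℚ) * (Rpoly m).eval ((d:ℚ) - (k:ℚ))
      = ((m-1).factorial : ℚ) * ((s.choose k : ℤ) * (superSymDim m 0 (d - k)) : ℤ) := by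
    intro k hk
    rw [Finset.mem_range] at hk
    have e1 : ((d:ℚ) - (k:ℚ)) = (((d - k : ℤ)) : ℚ) := by push_cast; ring
    rw [e1, Rpoly_eval_int m hm _ (by omega)]
    push_cast
    ring
  rw [Finset.sum_congr rfl step, ← Finset.mul_sum, ← Int.cast_sum, ← int_id m hm s d]
  field_simp

lemma det_vanish (m s : ℕ) (hm : 1 ≤ m) (l : ℕ) (hml : m < l) (lam : Fin l → ℕ)
    (hlam : ∀ i j : Fin l, i ≤ j → lam j ≤ lam i)
    (hs : s < lam ⟨m, hml⟩) :
    Matrix.det (Matrix.of fun i j : Fin l =>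
        superSymDim m s ((lam i : ℤ) - (i : ℤ) + (j : ℤ))) = 0 := by
  set M : Matrix (Fin l) (Fin l) ℤ := Matrix.of fun i j : Fin l =>
      superSymDim m s ((lam i : ℤ) - (i : ℤ) + (j : ℤ)) with hM
  set Mq : Matrix (Fin l) (Fin l) ℚ := M.map (Int.cast) with hMq
  suffices h : Mq.det = 0 by
    have := RingHom.map_det (Int.castRingHom ℚ) M
    rw [RingHom.mapMatrix_apply] at this
    have h2 : ((M.det : ℤ) : ℚ) = Mq.det := this
    rw [h] at h2
    exact_mod_cast h2
  -- the first m+1 rows are polynomial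
  have hcast : (m + 1) ≤ l := hml
  let emb : Fin (m+1) → Fin l := Fin.castLE hcast
  let f : Fin (m+1) → Polynomial ℚ := fun i =>
    (Ppoly m s).comp (Polynomial.X + Polynomial.C ((lam (emb i) : ℚ) - (i:ℚ)))
  have hfdeg : ∀ i, (f i).natDegree < m := by
    intro i
    rw [Polynomial.natDegree_comp, Polynomial.natDegree_X_add_C, mul_one]
    exact Ppoly_natDegree m s hm
  have hrow : ∀ (i : Fin (m+1)) (j : Fin l), Mq (emb i) j = (f i).eval (j:ℚ) := by
    intro i j
    have hlge : s + 1 ≤ lam (emb i) := by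
      have : lam ⟨m, hml⟩ ≤ lam (emb i) :=
        hlam (emb i) ⟨m, hml⟩ (by simp only [Fin.le_def, emb, Fin.coe_castLE]; omega)
      omega
    have : Mq (emb i) j = (superSymDim m s ((lam (emb i) : ℤ) - (i : ℤ) + (j : ℤ)) : ℚ) := by
      simp [hMq, hM, Matrix.map_apply, emb]
    rw [this]
    show _ = Polynomial.eval _ ((Ppoly m s).comp
      (Polynomial.X + Polynomial.C ((lam (emb i) : ℚ) - (i:ℚ))))
    simp only [Polynomial.eval_comp, Polynomial.eval_add, Polynomial.eval_X, Polynomial.eval_C]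
    rw [← Ppoly_eval m hm s _ (by push_cast; omega)]
    congr 1
    push_cast
    ring
  -- coefficient vectors
  let coeffs : Fin (m+1) → (Fin m → ℚ) := fun i t => (f i).coeff t
  have hdep : ¬ LinearIndependent ℚ coeffs := by
    intro hli
    have := hli.fintype_card_le_finrank
    rw [Module.finrank_fintype_fun_eq_card] at this
    simp at this
  obtain ⟨c, hcsum, i0, hc0⟩ := Fintype.not_linearIndependent_iff.mp hdep
  -- the corresponding row relation
  have hrowrel : ∀ j : Fin l, ∑ i : Fin (m+1), c i * Mq (emb i) j = 0 := by
    intro j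
    have expand : ∀ i : Fin (m+1), Mq (emb i) j = ∑ t : Fin m, coeffs i t * (j:ℚ)^(t:ℕ) := by
      intro i
      rw [hrow i j, Polynomial.eval_eq_sum_range' (lt_of_lt_of_le (hfdeg i) le_rfl) ((j:ℕ):ℚ)]
      rw [← Fin.sum_univ_eq_sum_range (fun t => (f i).coeff t * ((j:ℕ):ℚ)^t) m]
    calc ∑ i : Fin (m+1), c i * Mq (emb i) j
        = ∑ i : Fin (m+1), ∑ t : Fin m, c i * (coeffs i t * (j:ℚ)^(t:ℕ)) := by
          refine Finset.sum_congr rfl fun i _ => ?_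
          rw [expand i, Finset.mul_sum]
      _ = ∑ t : Fin m, (∑ i : Fin (m+1), c i * coeffs i t) * (j:ℚ)^(t:ℕ) := by
          rw [Finset.sum_comm]
          refine Finset.sum_congr rfl fun t _ => ?_
          rw [Finset.sum_mul]
          refine Finset.sum_congr rfl fun i _ => by ring
      _ = 0 := by
          refine Finset.sum_eq_zero fun t _ => ?_
          have : (∑ i : Fin (m+1), c i • coeffs i) t = 0 := by rw [hcsum]; rfl
          simpa using congrArg (· * (j:ℚ)^(t:ℕ)) (by simpa using this)
  -- build the null vector
  let v : Fin l → ℚ := fun i => if h : (i:ℕ) < m + 1 then c ⟨i, h⟩ else 0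
  have hv0 : v ≠ 0 := by
    intro hv
    apply hc0
    have : v (emb i0) = 0 := by rw [hv]; rfl
    have h' := by simpa [v, emb, Fin.eta] using this
    exact h' (Nat.lt_succ_iff.mp i0.isLt)
  have hvm : Matrix.vecMul v Mq = 0 := by
    funext j
    have h1 : ∑ i ∈ Finset.univ.map (Fin.castLEEmb hcast), v i * Mq i j
        = ∑ i : Fin (m+1), c i * Mq (emb i) j := by
      rw [Finset.sum_map]
      refine Finset.sum_congr rfl fun i _ => ?_
      congr 1
      show v (emb i) = c i
      have hi : ((emb i : Fin l) : ℕ) = (i : ℕ) := rfl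
      simp only [v, hi, i.isLt, dif_pos, Fin.eta]
    have h2 : ∑ i : Fin l, v i * Mq i j
        = ∑ i ∈ Finset.univ.map (Fin.castLEEmb hcast), v i * Mq i j := by
      refine (Finset.sum_subset (Finset.subset_univ _) ?_).symm
      intro x _ hx
      have hnot : ¬ ((x:ℕ) < m+1) := by
        intro hlt
        exact hx (Finset.mem_map.mpr ⟨⟨(x:ℕ), hlt⟩, Finset.mem_univ _, Fin.ext rfl⟩)
      simp [v, hnot]
      exact fun h => absurd (Nat.lt_succ_of_le h) hnot
    have key : ∑ i : Fin l, v i * Mq i j = 0 := by rw [h2, h1, hrowrel j]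
    show Matrix.vecMul v Mq j = (0 : Fin l → ℚ) j
    rw [Matrix.vecMul, dotProduct, key]
    simp
  exact Matrix.exists_vecMul_eq_zero_iff.mp ⟨v, hv0, hvm⟩

lemma ssd_zero (m s : ℕ) : superSymDim m s 0 = 1 := by
  have := ssd_coe m s 0
  norm_num at this
  exact this

lemma det_pad (m s l k : ℕ) (lam : Fin (l + k) → ℕ)
    (hz : ∀ i : Fin (l + k), l ≤ (i:ℕ) → lam i = 0) :
    Matrix.det (Matrix.of fun i j : Fin (l + k) =>
        superSymDim m s ((lam i : ℤ) - (i:ℤ) + (j:ℤ)))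
    = Matrix.det (Matrix.of fun i j : Fin l =>
        superSymDim m s ((lam (Fin.castAdd k i) : ℤ) - (i:ℤ) + (j:ℤ))) := by
  set M : Matrix (Fin (l+k)) (Fin (l+k)) ℤ := Matrix.of fun i j =>
      superSymDim m s ((lam i : ℤ) - (i:ℤ) + (j:ℤ)) with hM
  set A : Matrix (Fin l) (Fin l) ℤ := Matrix.of fun i j =>
      superSymDim m s ((lam (Fin.castAdd k i) : ℤ) - (i:ℤ) + (j:ℤ)) with hA
  set B : Matrix (Fin l) (Fin k) ℤ := Matrix.of fun i j =>
      superSymDim m s ((lam (Fin.castAdd k i) : ℤ) - (i:ℤ) + ((l + j : ℕ):ℤ)) with hB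
  set D : Matrix (Fin k) (Fin k) ℤ := Matrix.of fun i j =>
      superSymDim m s ((j:ℤ) - (i:ℤ)) with hD
  have hsub : M.submatrix (finSumFinEquiv : Fin l ⊕ Fin k ≃ Fin (l+k))
      (finSumFinEquiv : Fin l ⊕ Fin k ≃ Fin (l+k)) = Matrix.fromBlocks A B 0 D := by
    ext i j
    rcases i with i | i <;> rcases j with j | j <;>
      simp only [Matrix.submatrix_apply, finSumFinEquiv_apply_left, finSumFinEquiv_apply_right,
        Matrix.fromBlocks_apply₁₁, Matrix.fromBlocks_apply₁₂, Matrix.fromBlocks_apply₂₁,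
        Matrix.fromBlocks_apply₂₂, hM, hA, hB, hD, Matrix.of_apply, Matrix.zero_apply]
    · congr 2
      all_goals simp
    · congr 1
    · rw [hz _ (by simp [Fin.coe_natAdd])]
      refine ssd_neg m s ?_
      have h1 : (j:ℕ) < l := j.isLt
      simp only [Fin.coe_natAdd, Fin.coe_castAdd]
      push_cast
      omega
    · rw [hz _ (by simp [Fin.coe_natAdd])]
      congr 1
      push_cast [Fin.coe_natAdd]
      ring
  have hdet := Matrix.det_submatrix_equiv_self
    (finSumFinEquiv : Fin l ⊕ Fin k ≃ Fin (l+k)) M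
  rw [hsub] at hdet
  rw [← hdet, Matrix.det_fromBlocks_zero₂₁]
  have hDtri : D.BlockTriangular id := by
    intro i j hij
    exact ssd_neg m s (by simp at hij ⊢; omega)
  rw [Matrix.det_of_upperTriangular hDtri]
  have : ∀ i : Fin k, D i i = 1 := by
    intro i
    simp only [hD, Matrix.of_apply, sub_self]
    exact ssd_zero m s
  rw [Finset.prod_congr rfl (fun i _ => this i)]
  simp

section Base
variable (m : ℕ)

noncomputable def Nmat (m : ℕ) : Matrix (Fin m) (Fin m) ℚ :=
  Matrix.of fun k j => ((Ppoly m 0).comp (Polynomial.X + Polynomial.C ((j:ℚ)))).coeff k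

lemma mat_fact (hm : 1 ≤ m) (lam : Fin m → ℕ) :
    (Matrix.of fun i j : Fin m =>
        ((superSymDim m 0 ((lam i : ℤ) - (i:ℤ) + (j:ℤ))) : ℚ))
    = Matrix.vandermonde (fun i : Fin m => (lam i : ℚ) - (i:ℚ)) * Nmat m := by
  ext i j
  rw [Matrix.mul_apply]
  have hdeg : ((Ppoly m 0).comp (Polynomial.X + Polynomial.C ((j:ℚ)))).natDegree < m := by
    rw [Polynomial.natDegree_comp, Polynomial.natDegree_X_add_C, mul_one]
    exact Ppoly_natDegree m 0 hm
  have heval := Polynomial.eval_eq_sum_range' hdeg ((lam i : ℚ) - (i:ℚ))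
  rw [← Fin.sum_univ_eq_sum_range
    (fun t => ((Ppoly m 0).comp (Polynomial.X + Polynomial.C ((j:ℚ)))).coeff t
      * ((lam i : ℚ) - (i:ℚ)) ^ t) m] at heval
  have h2 : ∀ k : Fin m, Matrix.vandermonde (fun i : Fin m => (lam i : ℚ) - (i:ℚ)) i k
        * Nmat m k j
      = ((Ppoly m 0).comp (Polynomial.X + Polynomial.C ((j:ℚ)))).coeff k
        * ((lam i : ℚ) - (i:ℚ)) ^ (k:ℕ) := by
    intro k
    rw [Matrix.vandermonde]
    show ((lam i : ℚ) - (i:ℚ)) ^ (k:ℕ) * Nmat m k j = _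
    rw [Nmat]
    ring_nf
    rfl
  rw [Finset.sum_congr rfl (fun k _ => h2 k), ← heval]
  rw [Polynomial.eval_comp, Polynomial.eval_add, Polynomial.eval_X, Polynomial.eval_C]
  rw [show ((lam i : ℚ) - (i:ℚ) + (j:ℚ)) = (((lam i : ℤ) - (i:ℤ) + (j:ℤ) : ℤ) : ℚ) by push_cast; ring]
  rw [Ppoly_eval m hm 0 _ (by push_cast; omega)]
  simp

lemma det_zero_lam : Matrix.det (Matrix.of fun i j : Fin m =>
    superSymDim m 0 (((0:ℕ) : ℤ) - (i:ℤ) + (j:ℤ))) = 1 := by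
  set D : Matrix (Fin m) (Fin m) ℤ := Matrix.of fun i j =>
    superSymDim m 0 (((0:ℕ) : ℤ) - (i:ℤ) + (j:ℤ)) with hD
  have hDtri : D.BlockTriangular id := by
    intro i j hij
    exact ssd_neg m 0 (by simp at hij ⊢; omega)
  rw [Matrix.det_of_upperTriangular hDtri]
  have : ∀ i : Fin m, D i i = 1 := by
    intro i
    have : ((0:ℕ) : ℤ) - (i:ℤ) + (i:ℤ) = 0 := by ring
    simp only [hD, Matrix.of_apply, this]
    exact ssd_zero m 0
  rw [Finset.prod_congr rfl (fun i _ => this i)]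
  simp

lemma det_base_pos (hm : 1 ≤ m) (lam : Fin m → ℕ)
    (hlam : ∀ i j : Fin m, i ≤ j → lam j ≤ lam i) :
    0 < Matrix.det (Matrix.of fun i j : Fin m =>
        superSymDim m 0 ((lam i : ℤ) - (i:ℤ) + (j:ℤ))) := by
  set M : Matrix (Fin m) (Fin m) ℤ := Matrix.of fun i j =>
      superSymDim m 0 ((lam i : ℤ) - (i:ℤ) + (j:ℤ)) with hM
  set Mq : Matrix (Fin m) (Fin m) ℚ := M.map Int.cast with hMq
  have hMqM : (M.det : ℚ) = Mq.det := by
    have := RingHom.map_det (Int.castRingHom ℚ) M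
    rw [RingHom.mapMatrix_apply] at this
    exact this
  suffices h : 0 < Mq.det by
    rw [← hMqM] at h
    exact_mod_cast h
  have hfact : Mq = Matrix.vandermonde (fun i : Fin m => (lam i : ℚ) - (i:ℚ)) * Nmat m := by
    rw [← mat_fact m hm lam]
    ext i j
    simp [hMq, hM]
  have hfact0 : (Matrix.of fun i j : Fin m =>
        ((superSymDim m 0 (((0:ℕ):ℤ) - (i:ℤ) + (j:ℤ))) : ℚ))
      = Matrix.vandermonde (fun i : Fin m => ((0:ℕ):ℚ) - (i:ℚ)) * Nmat m :=
    mat_fact m hm (fun _ => 0)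
  have hdet0 : Matrix.det (Matrix.vandermonde (fun i : Fin m => ((0:ℕ):ℚ) - (i:ℚ)) * Nmat m) = 1 := by
    rw [← hfact0]
    have : (Matrix.of fun i j : Fin m =>
        ((superSymDim m 0 (((0:ℕ):ℤ) - (i:ℤ) + (j:ℤ))) : ℚ))
        = (Matrix.of fun i j : Fin m =>
          superSymDim m 0 (((0:ℕ) : ℤ) - (i:ℤ) + (j:ℤ))).map Int.cast := by
      ext i j; simp
    rw [this]
    have := RingHom.map_det (Int.castRingHom ℚ) (Matrix.of fun i j : Fin m =>
          superSymDim m 0 (((0:ℕ) : ℤ) - (i:ℤ) + (j:ℤ)))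
    rw [RingHom.mapMatrix_apply] at this
    rw [show (Int.cast : ℤ → ℚ) = ⇑(Int.castRingHom ℚ) from rfl, ← this, det_zero_lam]
    simp
  rw [Matrix.det_mul] at hdet0
  rw [hfact, Matrix.det_mul, Matrix.det_vandermonde]
  rw [Matrix.det_vandermonde] at hdet0
  set V1 : ℚ := ∏ i : Fin m, ∏ j ∈ Finset.Ioi i, (((lam j : ℚ) - (j:ℚ)) - ((lam i : ℚ) - (i:ℚ))) with hV1
  set V0 : ℚ := ∏ i : Fin m, ∏ j ∈ Finset.Ioi i, ((((0:ℕ):ℚ) - (j:ℚ)) - (((0:ℕ):ℚ) - (i:ℚ))) with hV0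
  -- V1 * V0 > 0
  have hpos : 0 < V1 * V0 := by
    rw [hV1, hV0, ← Finset.prod_mul_distrib]
    apply Finset.prod_pos
    intro i _
    rw [← Finset.prod_mul_distrib]
    apply Finset.prod_pos
    intro j hj
    rw [Finset.mem_Ioi] at hj
    have hij : (i:ℕ) < (j:ℕ) := hj
    have h1 : (lam j : ℚ) - (j:ℚ) - ((lam i:ℚ) - (i:ℚ)) < 0 := by
      have := hlam i j (le_of_lt hj)
      have hq : (lam j : ℤ) - (j:ℤ) < (lam i : ℤ) - (i:ℤ) := by omega
      have : ((lam j : ℤ) - (j:ℤ) : ℚ) < ((lam i : ℤ) - (i:ℤ) : ℚ) := by exact_mod_cast hq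
      push_cast at this
      linarith
    have h0 : (((0:ℕ):ℚ) - (j:ℚ)) - (((0:ℕ):ℚ) - (i:ℚ)) < 0 := by
      have : ((i:ℚ)) < ((j:ℚ)) := by exact_mod_cast hij
      linarith
    nlinarith
  have hV0ne : V0 * (Nmat m).det = 1 := hdet0
  nlinarith [hdet0, hpos, sq_nonneg V0]

noncomputable def JTmat (m s l : ℕ) (mu : Fin l → ℤ) : Matrix (Fin l) (Fin l) ℤ :=
  Matrix.of fun i j => superSymDim m s (mu i - (i:ℤ) + (j:ℤ))

lemma branch (m s l : ℕ) (mu : Fin l → ℤ) :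
    (JTmat m (s+1) l mu).det
    = ∑ S : Finset (Fin l),
        (JTmat m s l (fun i => mu i - if i ∈ S then 1 else 0)).det := by
  set A : Matrix (Fin l) (Fin l) ℤ :=
    Matrix.of fun i j => superSymDim m s (mu i - 1 - (i:ℤ) + (j:ℤ)) with hA
  set B : Matrix (Fin l) (Fin l) ℤ := JTmat m s l mu with hB
  have hsum : JTmat m (s+1) l mu = A + B := by
    ext i j
    show superSymDim m (s+1) (mu i - (i:ℤ) + (j:ℤ)) = _
    rw [ssd_rec]
    show _ = superSymDim m s (mu i - 1 - (i:ℤ) + (j:ℤ)) + superSymDim m s (mu i - (i:ℤ) + (j:ℤ))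
    rw [show mu i - (i:ℤ) + (j:ℤ) - 1 = mu i - 1 - (i:ℤ) + (j:ℤ) by ring]
    ring
  rw [hsum]
  have hdet : (A + B).det = Matrix.detRowAlternating (A + B) := rfl
  rw [hdet]
  have h2 : Matrix.detRowAlternating (A + B) = ∑ S : Finset (Fin l),
      Matrix.detRowAlternating (S.piecewise (A : Fin l → Fin l → ℤ) B) :=
    MultilinearMap.map_add_univ (Matrix.detRowAlternating).toMultilinearMap A B
  rw [h2]
  refine Finset.sum_congr rfl fun S _ => ?_
  have : (S.piecewise (A : Fin l → Fin l → ℤ) B)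
      = JTmat m s l (fun i => mu i - if i ∈ S then 1 else 0) := by
    funext i
    by_cases h : i ∈ S
    · show (if i ∈ S then A i else B i) = _
      rw [if_pos h]
      funext j
      show superSymDim m s (mu i - 1 - (i:ℤ) + (j:ℤ)) = _
      simp only [JTmat, Matrix.of_apply, if_pos h]
    · show (if i ∈ S then A i else B i) = _
      rw [if_neg h]
      funext j
      show superSymDim m s (mu i - (i:ℤ) + (j:ℤ)) = _
      simp only [JTmat, Matrix.of_apply, if_neg h]
      rw [show mu i - 0 = mu i by ring]
  rw [this]
  rfl

lemma term_nonneg (m s l : ℕ)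
    (IH : ∀ (nu : Fin l → ℕ), (∀ i j : Fin l, i ≤ j → nu j ≤ nu i) →
      0 ≤ (JTmat m s l (fun i => (nu i : ℤ))).det)
    (lam : Fin l → ℕ) (hlam : ∀ i j : Fin l, i ≤ j → lam j ≤ lam i)
    (S : Finset (Fin l)) :
    0 ≤ (JTmat m s l (fun i => (lam i : ℤ) - if i ∈ S then 1 else 0)).det := by
  set mu : Fin l → ℤ := fun i => (lam i : ℤ) - if i ∈ S then 1 else 0 with hmu
  have hbound : ∀ i : Fin l, (lam i : ℤ) - 1 ≤ mu i ∧ mu i ≤ (lam i : ℤ) := by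
    intro i
    simp only [hmu]
    split <;> omega
  by_cases hadj : ∃ a b : Fin l, a ≠ b ∧ mu a - (a:ℤ) = mu b - (b:ℤ)
  · obtain ⟨a, b, hab, he⟩ := hadj
    have : (JTmat m s l mu) a = (JTmat m s l mu) b := by
      funext j
      show superSymDim m s (mu a - (a:ℤ) + (j:ℤ)) = superSymDim m s (mu b - (b:ℤ) + (j:ℤ))
      rw [he]
    rw [Matrix.det_zero_of_row_eq hab this]
  · push_neg at hadj
    -- adjacent monotonicity
    have hadjmono : ∀ (a : ℕ) (h : a + 1 < l), mu ⟨a+1, h⟩ ≤ mu ⟨a, Nat.lt_of_succ_lt h⟩ := by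
      intro a h
      have hal : a < l := Nat.lt_of_succ_lt h
      by_contra hcon
      push_neg at hcon
      have h1 := hbound ⟨a, hal⟩
      have h2 := hbound ⟨a+1, h⟩
      have h3 : lam ⟨a+1, h⟩ ≤ lam ⟨a, hal⟩ := by
        apply hlam
        simp [Fin.le_def]
      have hne : (⟨a, hal⟩ : Fin l) ≠ ⟨a+1, h⟩ := by
        intro hcontra
        have := congrArg Fin.val hcontra
        simp at this
      have h4 := hadj _ _ hne
      have hva : ((⟨a, hal⟩ : Fin l) : ℤ) = (a:ℤ) := rfl
      have hvb : ((⟨a+1, h⟩ : Fin l) : ℤ) = (a:ℤ)+1 := by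
        have : ((⟨a+1, h⟩ : Fin l) : ℤ) = ((a+1 : ℕ) : ℤ) := rfl
        rw [this]; push_cast; ring
      rw [hva, hvb] at h4
      have h3' : (lam ⟨a+1, h⟩ : ℤ) ≤ (lam ⟨a, hal⟩ : ℤ) := by exact_mod_cast h3
      omega
    have hgen : ∀ (b : ℕ) (hb : b < l) (a : ℕ) (ha : a ≤ b), mu ⟨b, hb⟩ ≤ mu ⟨a, Nat.lt_of_le_of_lt ha hb⟩ := by
      intro b
      induction b with
      | zero =>
        intro hb a ha
        obtain rfl : a = 0 := Nat.le_zero.mp ha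
        exact le_refl _
      | succ b ih =>
        intro hb a ha
        rcases Nat.eq_or_lt_of_le ha with rfl | ha'
        · exact le_refl _
        · exact le_trans (hadjmono b hb) (ih (by omega) a (by omega))
    rcases Nat.eq_zero_or_pos l with rfl | hl
    · have : (JTmat m s 0 mu).det = 1 := Matrix.det_fin_zero
      omega
    by_cases hneg : mu ⟨l-1, by omega⟩ < 0
    · rw [Matrix.det_eq_zero_of_row_eq_zero ⟨l-1, by omega⟩]
      intro j
      show superSymDim m s (mu ⟨l-1, by omega⟩ - ((⟨l-1, by omega⟩ : Fin l):ℤ) + (j:ℤ)) = 0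
      apply ssd_neg
      have hv : ((⟨l-1, by omega⟩ : Fin l) : ℤ) = ((l:ℤ)-1) := by
        norm_num; omega
      have hj : (j:ℤ) ≤ (l:ℤ)-1 := by
        have := j.isLt; omega
      omega
    · push_neg at hneg
      have hnn : ∀ i : Fin l, 0 ≤ mu i := by
        intro i
        refine le_trans hneg ?_
        have := hgen (l-1) (by omega) (i:ℕ) (by have := i.isLt; omega)
        convert this using 2 <;> simp [Fin.eta]
      set nu : Fin l → ℕ := fun i => (mu i).toNat with hnu
      have heq : (fun i : Fin l => (nu i : ℤ)) = mu := by
        funext i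
        simp only [hnu, Int.toNat_of_nonneg (hnn i)]
      have hnulam : ∀ i j : Fin l, i ≤ j → nu j ≤ nu i := by
        intro i j hij
        have : mu j ≤ mu i := by
          rcases Nat.eq_or_lt_of_le (Fin.le_def.mp hij) with he | hlt
          · have : i = j := Fin.ext he
            rw [this]
          · have := hgen (j:ℕ) j.isLt (i:ℕ) (by omega)
            convert this using 2 <;> simp [Fin.eta]
        simp only [hnu]
        omega
      have := IH nu hnulam
      rw [heq] at this
      exact this

lemma fits_pos_zero (m : ℕ) (hm : 1 ≤ m) (l : ℕ) (lam : Fin l → ℕ)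
    (hlam : ∀ i j : Fin l, i ≤ j → lam j ≤ lam i)
    (hfits : ∀ h : m < l, lam ⟨m, h⟩ = 0) :
    0 < (JTmat m 0 l (fun i => (lam i : ℤ))).det := by
  rcases le_or_gt l m with hlm | hml
  · obtain ⟨k, rfl⟩ := Nat.exists_eq_add_of_le hlm
    set lam' : Fin (l + k) → ℕ := fun i => if h : (i:ℕ) < l then lam ⟨i, h⟩ else 0 with hlam'
    have hz : ∀ i : Fin (l + k), l ≤ (i:ℕ) → lam' i = 0 := by
      intro i hi
      have hni : ¬ ((i:ℕ) < l) := by omega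
      simp only [hlam', dif_neg hni]
    have hpad := det_pad (l+k) 0 l k lam' hz
    have hrestr : (Matrix.of fun i j : Fin l =>
        superSymDim (l+k) 0 ((lam' (Fin.castAdd k i) : ℤ) - (i:ℤ) + (j:ℤ)))
        = (Matrix.of fun i j : Fin l =>
        superSymDim (l+k) 0 ((lam i : ℤ) - (i:ℤ) + (j:ℤ))) := by
      ext i j
      have : lam' (Fin.castAdd k i) = lam i := by
        simp only [hlam', Fin.coe_castAdd, dif_pos i.isLt, Fin.eta]
      rw [Matrix.of_apply, Matrix.of_apply, this]
    have hlam'mono : ∀ i j : Fin (l+k), i ≤ j → lam' j ≤ lam' i := by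
      intro i j hij
      have hij' : (i:ℕ) ≤ (j:ℕ) := Fin.le_def.mp hij
      simp only [hlam']
      split
      · split
        · exact hlam _ _ (Fin.mk_le_mk.mpr hij')
        · omega
      · split
        · omega
        · omega
    have hbase := det_base_pos (l+k) hm lam' hlam'mono
    show 0 < Matrix.det (Matrix.of fun i j : Fin l =>
        superSymDim (l+k) 0 ((lam i : ℤ) - (i:ℤ) + (j:ℤ)))
    rw [← hrestr, ← hpad]
    exact hbase
  · obtain ⟨k, rfl⟩ := Nat.exists_eq_add_of_le (le_of_lt hml)
    have hz : ∀ i : Fin (m + k), m ≤ (i:ℕ) → lam i = 0 := by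
      intro i hi
      have h0 : lam ⟨m, hml⟩ = 0 := hfits hml
      have := hlam ⟨m, hml⟩ i (by simp [Fin.le_def]; omega)
      omega
    have hpad := det_pad m 0 m k lam hz
    have hbase := det_base_pos m hm (fun i => lam (Fin.castAdd k i))
      (fun i j hij => hlam _ _ (by
        rw [Fin.le_def, Fin.coe_castAdd, Fin.coe_castAdd]
        exact Fin.le_def.mp hij))
    show 0 < Matrix.det (Matrix.of fun i j : Fin (m+k) =>
        superSymDim m 0 ((lam i : ℤ) - (i:ℤ) + (j:ℤ)))
    rw [hpad]
    exact hbase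

lemma main_induction (m : ℕ) (hm : 1 ≤ m) : ∀ s : ℕ,
    (∀ l (lam : Fin l → ℕ), (∀ i j : Fin l, i ≤ j → lam j ≤ lam i) →
      0 ≤ (JTmat m s l (fun i => (lam i : ℤ))).det)
    ∧ (∀ l (lam : Fin l → ℕ), (∀ i j : Fin l, i ≤ j → lam j ≤ lam i) →
      (∀ h : m < l, lam ⟨m, h⟩ ≤ s) →
      0 < (JTmat m s l (fun i => (lam i : ℤ))).det) := by
  intro s
  induction s with
  | zero =>
    constructor
    · intro l lam hlam
      by_cases hvan : ∃ h : m < l, 1 ≤ lam ⟨m, h⟩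
      · obtain ⟨hml, h1⟩ := hvan
        have := det_vanish m 0 hm l hml lam hlam h1
        show (0:ℤ) ≤ (JTmat m 0 l (fun i => (lam i : ℤ))).det
        rw [show (JTmat m 0 l (fun i => (lam i : ℤ))).det
          = Matrix.det (Matrix.of fun i j : Fin l =>
            superSymDim m 0 ((lam i : ℤ) - (i : ℤ) + (j : ℤ))) from rfl, this]
      · push_neg at hvan
        exact le_of_lt (fits_pos_zero m hm l lam hlam (fun h => by have := hvan h; omega))
    · intro l lam hlam hfits
      exact fits_pos_zero m hm l lam hlam (fun h => by have := hfits h; omega)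
  | succ s ih =>
    obtain ⟨ihnn, ihpos⟩ := ih
    constructor
    · intro l lam hlam
      rw [branch]
      apply Finset.sum_nonneg
      intro S _
      exact term_nonneg m s l (ihnn l) lam hlam S
    · intro l lam hlam hfits
      rw [branch]
      set Sstar : Finset (Fin l) :=
        Finset.univ.filter (fun i => m ≤ (i:ℕ) ∧ s+1 ≤ lam i) with hSstar
      have hterm : ∀ S : Finset (Fin l),
          0 ≤ (JTmat m s l (fun i => (lam i : ℤ) - if i ∈ S then 1 else 0)).det :=
        fun S => term_nonneg m s l (ihnn l) lam hlam S
      have hmem : ∀ i : Fin l, (i ∈ Sstar ↔ (m ≤ (i:ℕ) ∧ s+1 ≤ lam i)) := by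
        intro i; simp [hSstar]
      set nu : Fin l → ℕ := fun i => if i ∈ Sstar then lam i - 1 else lam i with hnu
      have hcast : (fun i : Fin l => (nu i : ℤ))
          = (fun i : Fin l => (lam i : ℤ) - if i ∈ Sstar then 1 else 0) := by
        funext i
        simp only [hnu]
        by_cases h : i ∈ Sstar
        · rw [if_pos h, if_pos h]
          have := (hmem i).mp h
          push_cast [Nat.cast_sub (by omega : 1 ≤ lam i)]
          ring
        · rw [if_neg h, if_neg h]
          push_cast
          ring
      have hnumono : ∀ i j : Fin l, i ≤ j → nu j ≤ nu i := by
        intro i j hij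
        have hl := hlam i j hij
        have hij' : (i:ℕ) ≤ (j:ℕ) := hij
        simp only [hnu]
        by_cases hi : i ∈ Sstar <;> by_cases hj : j ∈ Sstar <;>
          simp only [if_pos, if_neg, hi, hj, ite_true, ite_false]
        · omega
        · have := (hmem i).mp hi
          have hjn := (hmem j).mpr
          have : ¬ (m ≤ (j:ℕ) ∧ s+1 ≤ lam j) := fun hc => hj (hjn hc)
          have hmi := (hmem i).mp hi
          omega
        · omega
        · omega
      have hnufits : ∀ h : m < l, nu ⟨m, h⟩ ≤ s := by
        intro h
        have := hfits h
        simp only [hnu]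
        by_cases hmem' : (⟨m, h⟩ : Fin l) ∈ Sstar
        · rw [if_pos hmem']
          have := (hmem _).mp hmem'
          omega
        · rw [if_neg hmem']
          have : ¬ (m ≤ m ∧ s+1 ≤ lam ⟨m, h⟩) := fun hc => hmem' ((hmem _).mpr hc)
          omega
      have hposstar : 0 < (JTmat m s l
          (fun i => (lam i : ℤ) - if i ∈ Sstar then 1 else 0)).det := by
        rw [← hcast]
        exact ihpos l nu hnumono hnufits
      calc (0:ℤ) < (JTmat m s l (fun i => (lam i : ℤ) - if i ∈ Sstar then 1 else 0)).det :=
            hposstar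
        _ ≤ ∑ S : Finset (Fin l),
              (JTmat m s l (fun i => (lam i : ℤ) - if i ∈ S then 1 else 0)).det :=
            Finset.single_le_sum (fun S _ => hterm S) (Finset.mem_univ Sstar)


/-- for a partition `λ` of length `ℓ`, the Jacobi–Trudi determinant
`det(a(λ_i − i + j))` built from the super symmetric power dimensions of `ℂ^{m|s}`
vanishes if and only if `λ_{m+1} > s`, i.e. iff `λ` does not fit in the `(m|s)`-hook. -/
theorem stmt_14 (m s : ℕ) (hm : 1 ≤ m) (l : ℕ) (lam : Fin l → ℕ)
    (hlam : ∀ i j : Fin l, i ≤ j → lam j ≤ lam i)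
    (hpos : ∀ i, 0 < lam i) :
    Matrix.det (Matrix.of fun i j : Fin l =>
        superSymDim m s ((lam i : ℤ) - (i : ℤ) + (j : ℤ))) = 0 ↔
      ∃ h : m < l, s < lam ⟨m, h⟩ := by
  constructor
  · intro hdet
    by_contra hcon
    push_neg at hcon
    have hfits : ∀ h : m < l, lam ⟨m, h⟩ ≤ s := fun h => hcon h
    have hpos' := (main_induction m hm s).2 l lam hlam hfits
    have : (JTmat m s l (fun i => (lam i : ℤ))).det
        = Matrix.det (Matrix.of fun i j : Fin l =>
          superSymDim m s ((lam i : ℤ) - (i : ℤ) + (j : ℤ))) := rfl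
    omega
  · rintro ⟨hml, hs⟩
    exact det_vanish m s hm l hml lam hlam hs
end Base
end
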